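/- Let R be a commutative ring and I an ideal of R. Then I is a weakly clean ideal of R if and only if the ideal I[[x]] of power series with all coefficients in I is a weakly clean ideal of R[[x]]. -/

import Mathlib

def IsWeaklyClean {R : Type*} [Ring R] (x : R) : Prop :=
  ∃ (u : Rˣ) (e : R), IsIdempotentElem e ∧ (x = ↑u + e ∨ x = ↑u - e)

def IsCleanElem {R : Type*} [Ring R] (x : R) : Prop :=
  ∃ (u : Rˣ) (e : R), IsIdempotentElem e ∧ x = ↑u + e

/-- For a commutative ring R, an ideal I is weakly clean iff I[[x]] is a weakly
clean ideal of R[[x]]. -/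
theorem stmt15 {R : Type*} [CommRing R] (I : Ideal R) :
    (∀ a ∈ I, IsWeaklyClean a) ↔
      (∀ f : PowerSeries R, (∀ n : ℕ, PowerSeries.coeff n f ∈ I) → IsWeaklyClean f) := by
  constructor
  · intro h f hf
    obtain ⟨u, e, he, hue⟩ := h (PowerSeries.coeff 0 f) (hf 0)
    have hce : IsIdempotentElem (PowerSeries.C e) := by
      unfold IsIdempotentElem
      rw [← map_mul, he]
    rcases hue with h1 | h1
    · have hu : IsUnit (f - PowerSeries.C e) := by
        rw [PowerSeries.isUnit_iff_constantCoeff]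
        simp only [map_sub, PowerSeries.constantCoeff_C]
        rw [← PowerSeries.coeff_zero_eq_constantCoeff_apply, h1, add_sub_cancel_right]
        exact u.isUnit
      obtain ⟨v, hv⟩ := hu
      exact ⟨v, PowerSeries.C e, hce, Or.inl (by rw [hv]; ring)⟩
    · have hu : IsUnit (f + PowerSeries.C e) := by
        rw [PowerSeries.isUnit_iff_constantCoeff]
        simp only [map_add, PowerSeries.constantCoeff_C]
        rw [← PowerSeries.coeff_zero_eq_constantCoeff_apply, h1, sub_add_cancel]
        exact u.isUnit
      obtain ⟨v, hv⟩ := hu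
      exact ⟨v, PowerSeries.C e, hce, Or.inr (by rw [hv]; ring)⟩
  · intro h a ha
    obtain ⟨u, e, he, hue⟩ := h (PowerSeries.C a) (by
      intro n
      rw [PowerSeries.coeff_C]
      split <;> simp [ha])
    refine ⟨(Units.map (PowerSeries.constantCoeff (R := R) : PowerSeries R →* R)) u,
      PowerSeries.constantCoeff e, ?_, ?_⟩
    · unfold IsIdempotentElem
      rw [← map_mul, he]
    · rcases hue with h1 | h1
      · left
        have := congrArg (PowerSeries.constantCoeff (R := R)) h1
        simpa using this
      · right
        have := congrArg (PowerSeries.constantCoeff (R := R)) h1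
        simpa using this
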